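/- (Existence of cubes with negligible frames.) Let μ be a Radon measure on ℝ^N, K compact with μ(K) > 0, and U ⊇ K open with μ(U) ≤ (3/2)μ(K). Let r > 0 be such that every cube Bx(x,r) of side length 2r intersecting K is contained in U. Fix ε > 0. For ω ∈ Bx(0,r), shift the standard cubulation by cubes of side 2r by ω, and call a cube Bx(x,r) in the shifted cubulation 'good' if it meets K and μ(Fr(x,r,ε)) ≤ 16N·2^N·ε·μ(Bx(x,r)), where Fr(x,r,ε) = {y ∈ Bx(x,r) : |x_i − y_i| ≥ (1−ε)r for some i}. Then there exists ω ∈ Bx(0,r) such that the union of good cubes covers at least 3/4 of the measure of K, i.e. μ(K ∩ ⋃ good cubes) ≥ (3/4)μ(K). -/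

import Mathlib

open MeasureTheory
open scoped ENNReal Classical

/-- The closed cube of center `x` and half-side `r`. -/
def Bx {N : ℕ} (x : Fin N → ℝ) (r : ℝ) : Set (Fin N → ℝ) :=
  {y | ∀ i, |x i - y i| ≤ r}

/-- The `ε`-frame of the cube `Bx x r`. -/
def Fr {N : ℕ} (x : Fin N → ℝ) (r ε : ℝ) : Set (Fin N → ℝ) :=
  {y ∈ Bx x r | ∃ i, (1 - ε) * r ≤ |x i - y i|}

lemma isClosed_Bx {N : ℕ} (x : Fin N → ℝ) (r : ℝ) : IsClosed (Bx x r) := by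
  have h : Bx x r = ⋂ i, {y : Fin N → ℝ | |x i - y i| ≤ r} := by
    ext y; simp [Bx, Set.mem_iInter]
  rw [h]
  exact isClosed_iInter fun i =>
    isClosed_le ((continuous_const.sub (continuous_apply i)).abs) continuous_const

lemma measurableSet_Fr {N : ℕ} (x : Fin N → ℝ) (r ε : ℝ) : MeasurableSet (Fr x r ε) := by
  have h : Fr x r ε = Bx x r ∩ ⋃ i, {y : Fin N → ℝ | (1 - ε) * r ≤ |x i - y i|} := by
    ext y; simp [Fr, Set.mem_iUnion]
  rw [h]
  exact ((isClosed_Bx x r).inter (isClosed_iUnion_of_finite fun i =>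
    isClosed_le continuous_const ((continuous_const.sub (continuous_apply i)).abs))).measurableSet

lemma Fr_subset_Bx {N : ℕ} (x : Fin N → ℝ) (r ε : ℝ) : Fr x r ε ⊆ Bx x r := fun _ h => h.1

lemma exists_cube {N : ℕ} {r : ℝ} (hr : 0 < r) (ω y : Fin N → ℝ) :
    ∃ n : Fin N → ℤ, ∀ i, |(2*r*(n i) + ω i) - y i| ≤ r := by
  refine ⟨fun i => ⌈(y i - ω i - r)/(2*r)⌉, fun i => ?_⟩
  set A := (y i - ω i - r)/(2*r) with hA
  have h2r : (0:ℝ) < 2*r := by linarith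
  have hAeq : A * (2*r) = y i - ω i - r := by rw [hA]; exact div_mul_cancel₀ _ h2r.ne'
  have h1 : A ≤ ((⌈A⌉ : ℤ) : ℝ) := Int.le_ceil A
  have h2 : ((⌈A⌉ : ℤ) : ℝ) < A + 1 := Int.ceil_lt_add_one A
  rw [abs_le]
  constructor <;> nlinarith [mul_le_mul_of_nonneg_right h1 h2r.le,
    mul_le_mul_of_nonneg_right h2.le h2r.le]


lemma cube_coord {r : ℝ} (hr : 0 < r) (z w : ℝ) (n : ℤ) (h : |2*r*(n:ℝ) + w - z| ≤ r) :
    n = ⌊(z - w - r)/(2*r)⌋ ∨ n = ⌊(z - w - r)/(2*r)⌋ + 1 := by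
  set A := (z - w - r)/(2*r) with hA
  have h2r : (0:ℝ) < 2*r := by linarith
  have hAeq : A * (2*r) = z - w - r := by rw [hA]; exact div_mul_cancel₀ _ h2r.ne'
  rw [abs_le] at h
  have hn1 : A ≤ (n:ℝ) := by
    rw [hA, div_le_iff₀ h2r]; linarith [h.2]
  have hn2 : (n:ℝ) ≤ A + 1 := by
    have : (n:ℝ) - 1 ≤ A := by rw [hA, le_div_iff₀ h2r]; linarith [h.1]
    linarith
  have g1 : ⌊A⌋ ≤ n := by
    have := Int.floor_mono hn1; simpa using this
  have g2 : n ≤ ⌊A⌋ + 1 := by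
    have h' : n ≤ ⌊A + 1⌋ := Int.le_floor.mpr (by exact_mod_cast hn2)
    rwa [Int.floor_add_one] at h'
  omega


lemma frame_count {r ε : ℝ} {m : ℕ} (hr : 0 < r) (hε : 0 < ε) (hεm : (m:ℝ)*ε < 2) (z : ℝ) :
    (Finset.univ.filter (fun k : Fin m =>
      ∃ n : ℤ, |2*r*(n:ℝ) + (2*r*(k.val:ℝ)/m - r) - z| ≤ r ∧
        (1-ε)*r ≤ |2*r*(n:ℝ) + (2*r*(k.val:ℝ)/m - r) - z|)).card ≤ 2 := by
  classical
  rcases Nat.eq_zero_or_pos m with hm | hm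
  · subst hm
    exact le_trans (Finset.card_le_univ _) (by simp [Finset.card_univ])
  have hm0 : (0:ℝ) < m := by exact_mod_cast hm
  have h2r : (0:ℝ) < 2*r := by linarith
  set q := ⌈((m:ℝ)*z - m*ε*r)/(2*r)⌉ with hq
  set P : Fin m → Prop := fun k =>
    ∃ j : ℤ, |(m:ℝ)*z - 2*r*((k.val:ℝ) + (m:ℝ)*(j:ℝ))| ≤ (m:ℝ)*ε*r with hP
  set f : Fin m → ℤ := fun k => if h : P k then (k.val:ℤ) + m * h.choose else 0 with hf
  have hPmem : ∀ k ∈ Finset.univ.filter (fun k : Fin m =>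
      ∃ n : ℤ, |2*r*(n:ℝ) + (2*r*(k.val:ℝ)/m - r) - z| ≤ r ∧
        (1-ε)*r ≤ |2*r*(n:ℝ) + (2*r*(k.val:ℝ)/m - r) - z|), P k := by
    intro k hk
    simp only [Finset.mem_filter, Finset.mem_univ, true_and] at hk
    obtain ⟨n, h1, h2⟩ := hk
    set X := 2*r*(k.val:ℝ)/m with hX
    have hid : X * m = 2*r*(k.val:ℝ) := by rw [hX]; field_simp
    set u := 2*r*(n:ℝ) + (X - r) - z with hu
    have hmz : (m:ℝ)*z = 2*r*m*n + 2*r*(k.val:ℝ) - r*m - u*m := by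
      have hz : z = 2*r*(n:ℝ) + X - r - u := by rw [hu]; ring
      rw [hz]; ring_nf; ring_nf at hid; linarith [hid]
    rcases abs_cases u with ⟨he, hs⟩ | ⟨he, hs⟩
    · rw [he] at h1 h2
      refine ⟨n - 1, ?_⟩
      have key : (m:ℝ)*z - 2*r*((k.val:ℝ) + (m:ℝ)*((n-1:ℤ):ℝ)) = m*(r - u) := by
        push_cast; linarith [hmz]
      rw [key, abs_le]
      constructor <;> nlinarith [hm0.le, hε.le, hr.le]
    · rw [he] at h1 h2
      refine ⟨n, ?_⟩
      have key : (m:ℝ)*z - 2*r*((k.val:ℝ) + (m:ℝ)*((n:ℤ):ℝ)) = -(m*(r + u)) := by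
        push_cast; linarith [hmz]
      rw [key, abs_neg, abs_le]
      constructor <;> nlinarith [hm0.le, hε.le, hr.le]
  have hmaps : ∀ k ∈ Finset.univ.filter (fun k : Fin m =>
      ∃ n : ℤ, |2*r*(n:ℝ) + (2*r*(k.val:ℝ)/m - r) - z| ≤ r ∧
        (1-ε)*r ≤ |2*r*(n:ℝ) + (2*r*(k.val:ℝ)/m - r) - z|), f k ∈ ({q, q+1} : Finset ℤ) := by
    intro k hk
    have hPk := hPmem k hk
    have hfk : f k = (k.val:ℤ) + m * hPk.choose := by rw [hf]; exact dif_pos hPk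
    have spec := hPk.choose_spec
    rw [abs_le] at spec
    have hcast : ((f k : ℤ) : ℝ) = (k.val:ℝ) + (m:ℝ)*(hPk.choose:ℝ) := by
      rw [hfk]; push_cast; ring
    have hlow : q ≤ f k := by
      rw [hq]
      apply Int.ceil_le.mpr
      rw [hcast, div_le_iff₀ h2r]
      linarith [spec.2]
    have hhigh : f k ≤ q + 1 := by
      have hub : ((f k : ℤ) : ℝ) ≤ ((m:ℝ)*z - m*ε*r)/(2*r) + m*ε := by
        rw [hcast, ← sub_nonneg]
        have : ((m:ℝ)*z - m*ε*r)/(2*r) + m*ε - ((k.val:ℝ) + (m:ℝ)*(hPk.choose:ℝ))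
            = (((m:ℝ)*z - m*ε*r) + m*ε*(2*r) - ((k.val:ℝ) + (m:ℝ)*(hPk.choose:ℝ))*(2*r))/(2*r) := by
          field_simp
          try ring
        rw [this]
        apply div_nonneg _ h2r.le
        nlinarith [spec.1]
      have hq2 : ((m:ℝ)*z - m*ε*r)/(2*r) ≤ (q:ℝ) := Int.le_ceil _
      have : ((f k : ℤ) : ℝ) < (q:ℝ) + 2 := by linarith
      have : f k < q + 2 := by exact_mod_cast this
      omega
    simp only [Finset.mem_insert, Finset.mem_singleton]
    omega
  have hinj : Set.InjOn f ↑(Finset.univ.filter (fun k : Fin m =>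
      ∃ n : ℤ, |2*r*(n:ℝ) + (2*r*(k.val:ℝ)/m - r) - z| ≤ r ∧
        (1-ε)*r ≤ |2*r*(n:ℝ) + (2*r*(k.val:ℝ)/m - r) - z|)) := by
    intro k hk k' hk' hkk
    have hPk := hPmem k (by simpa using hk)
    have hPk' := hPmem k' (by simpa using hk')
    have hfk : f k = (k.val:ℤ) + m * hPk.choose := by rw [hf]; exact dif_pos hPk
    have hfk' : f k' = (k'.val:ℤ) + m * hPk'.choose := by rw [hf]; exact dif_pos hPk'
    rw [hfk, hfk'] at hkk
    have hdvd : (m:ℤ) ∣ ((k.val:ℤ) - (k'.val:ℤ)) := ⟨hPk'.choose - hPk.choose, by linarith⟩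
    have habs : |((k.val:ℤ) - (k'.val:ℤ))| < m := by
      have := k.2; have := k'.2
      rw [abs_lt]; omega
    have := Int.eq_zero_of_abs_lt_dvd hdvd habs
    have : k.val = k'.val := by omega
    exact Fin.ext this
  refine le_trans (Finset.card_le_card_of_injOn f hmaps hinj) ?_
  exact le_trans (Finset.card_insert_le _ _) (by simp)

lemma count_bound {N m : ℕ} {r ε : ℝ} (hr : 0 < r) (hε : 0 < ε) (hεm : (m:ℝ)*ε < 2)
    (y : Fin N → ℝ) :
    ∑' (p : (Fin N → Fin m) × (Fin N → ℤ)),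
      (Fr (fun i => 2*r*((p.2 i : ℤ):ℝ) + (2*r*((p.1 i).val:ℝ)/m - r)) r ε).indicator
        (fun _ => (1:ℝ≥0∞)) y ≤ ((2*N*2^N*m^(N-1) : ℕ) : ℝ≥0∞) := by
  classical
  set G : Fin N → Fin m → ℤ := fun i k => ⌊(y i - (2*r*(k.val:ℝ)/m - r) - r)/(2*r)⌋ with hG
  set Sk : Fin N → Finset (Fin m) := fun i => Finset.univ.filter (fun k : Fin m =>
      ∃ n : ℤ, |2*r*(n:ℝ) + (2*r*(k.val:ℝ)/m - r) - y i| ≤ r ∧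
        (1-ε)*r ≤ |2*r*(n:ℝ) + (2*r*(k.val:ℝ)/m - r) - y i|) with hSk
  set D : Finset ((Fin N → Fin m) × (Fin N → Fin 2)) :=
      (Finset.univ.filter (fun κ : Fin N → Fin m => ∃ i, κ i ∈ Sk i)) ×ˢ Finset.univ with hD
  set T : Finset ((Fin N → Fin m) × (Fin N → ℤ)) :=
      D.image (fun p => (p.1, fun i => G i (p.1 i) + ((p.2 i).val : ℤ))) with hT
  have hmem : ∀ p : (Fin N → Fin m) × (Fin N → ℤ),
      y ∈ Fr (fun i => 2*r*((p.2 i : ℤ):ℝ) + (2*r*((p.1 i).val:ℝ)/m - r)) r ε → p ∈ T := by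
    rintro ⟨κ, n⟩ hy
    simp only [Fr, Bx, Set.mem_setOf_eq] at hy
    obtain ⟨hyBx, i₀, hfr⟩ := hy
    have hcoord : ∀ i, n i = G i (κ i) ∨ n i = G i (κ i) + 1 := by
      intro i
      exact cube_coord hr (y i) (2*r*((κ i).val:ℝ)/m - r) (n i) (hyBx i)
    refine Finset.mem_image.mpr ⟨(κ, fun i => if n i = G i (κ i) then (0 : Fin 2) else 1), ?_, ?_⟩
    · rw [hD]
      refine Finset.mem_product.mpr ⟨?_, Finset.mem_univ _⟩
      refine Finset.mem_filter.mpr ⟨Finset.mem_univ _, ⟨i₀, ?_⟩⟩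
      rw [hSk]
      exact Finset.mem_filter.mpr ⟨Finset.mem_univ _, ⟨n i₀, hyBx i₀, hfr⟩⟩
    · refine Prod.ext rfl ?_
      funext i
      rcases hcoord i with h | h
      · simp [h]
      · have hne : ¬ (n i = G i (κ i)) := by omega
        simp [hne, h]
  have hzero : ∀ p ∉ T,
      (Fr (fun i => 2*r*((p.2 i : ℤ):ℝ) + (2*r*((p.1 i).val:ℝ)/m - r)) r ε).indicator
        (fun _ => (1:ℝ≥0∞)) y = 0 := fun p hp =>
    Set.indicator_of_notMem (fun hy => hp (hmem p hy)) _
  rw [tsum_eq_sum hzero]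
  have hcard : T.card ≤ 2*N*2^N*m^(N-1) := by
    have h1 : T.card ≤ D.card := Finset.card_image_le
    have h2 : D.card = (Finset.univ.filter
        (fun κ : Fin N → Fin m => ∃ i, κ i ∈ Sk i)).card * 2^N := by
      rw [hD, Finset.card_product]
      congr 1
      rw [Finset.card_univ, Fintype.card_fun]
      simp
    have hsplit : ∀ i₀ : Fin N,
        (Finset.univ.filter (fun κ : Fin N → Fin m => κ i₀ ∈ Sk i₀)).card ≤ 2 * m^(N-1) := by
      intro i₀
      have hcard2 : (Sk i₀).card ≤ 2 := frame_count hr hε hεm (y i₀)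
      have hinj := Finset.card_le_card_of_injOn
        (f := fun κ : Fin N → Fin m => (κ i₀, fun j : {j : Fin N // j ≠ i₀} => κ j.val))
        (t := (Sk i₀) ×ˢ (Finset.univ : Finset ({j : Fin N // j ≠ i₀} → Fin m)))
        (s := Finset.univ.filter (fun κ : Fin N → Fin m => κ i₀ ∈ Sk i₀))
        (fun κ hκ => by
          refine Finset.mem_product.mpr ⟨?_, Finset.mem_univ _⟩
          exact (Finset.mem_filter.mp hκ).2)
        (by
          intro κ hκ κ' hκ' heq
          funext j
          by_cases hj : j = i₀
          · subst hj; exact congrArg Prod.fst heq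
          · have := congrArg Prod.snd heq
            exact congrFun this ⟨j, hj⟩)
      refine le_trans hinj ?_
      rw [Finset.card_product, Finset.card_univ, Fintype.card_fun]
      have hsub : Fintype.card {j : Fin N // j ≠ i₀} = N - 1 := by
        simp [Fintype.card_subtype_compl]
      rw [hsub, Fintype.card_fin]
      exact Nat.mul_le_mul_right _ hcard2
    have h3 : (Finset.univ.filter
        (fun κ : Fin N → Fin m => ∃ i, κ i ∈ Sk i)).card ≤ N * (2 * m^(N-1)) := by
      have hsubset : Finset.univ.filter (fun κ : Fin N → Fin m => ∃ i, κ i ∈ Sk i) ⊆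
          Finset.univ.biUnion (fun i₀ : Fin N =>
            Finset.univ.filter (fun κ : Fin N → Fin m => κ i₀ ∈ Sk i₀)) := by
        intro κ hκ
        obtain ⟨i₀, hi₀⟩ := (Finset.mem_filter.mp hκ).2
        exact Finset.mem_biUnion.mpr ⟨i₀, Finset.mem_univ _,
          Finset.mem_filter.mpr ⟨Finset.mem_univ _, hi₀⟩⟩
      refine le_trans (Finset.card_le_card hsubset) ?_
      refine le_trans (Finset.card_biUnion_le) ?_
      calc ∑ i₀ : Fin N, (Finset.univ.filter
            (fun κ : Fin N → Fin m => κ i₀ ∈ Sk i₀)).card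
          ≤ ∑ _i₀ : Fin N, 2 * m^(N-1) := Finset.sum_le_sum (fun i _ => hsplit i)
        _ = N * (2 * m^(N-1)) := by simp [Finset.sum_const, Finset.card_univ, mul_comm]
    calc T.card ≤ (Finset.univ.filter
          (fun κ : Fin N → Fin m => ∃ i, κ i ∈ Sk i)).card * 2^N := h2 ▸ h1
      _ ≤ (N * (2 * m^(N-1))) * 2^N := Nat.mul_le_mul_right _ h3
      _ = 2*N*2^N*m^(N-1) := by ring
  calc ∑ p ∈ T, (Fr (fun i => 2*r*((p.2 i : ℤ):ℝ) + (2*r*((p.1 i).val:ℝ)/m - r)) r ε).indicator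
        (fun _ => (1:ℝ≥0∞)) y
      ≤ ∑ _p ∈ T, (1:ℝ≥0∞) := by
        refine Finset.sum_le_sum (fun p _ => ?_)
        by_cases hy : y ∈ Fr (fun i => 2*r*((p.2 i : ℤ):ℝ) + (2*r*((p.1 i).val:ℝ)/m - r)) r ε
        · rw [Set.indicator_of_mem hy]
        · rw [Set.indicator_of_notMem hy]; exact zero_le
    _ = (T.card : ℝ≥0∞) := by simp
    _ ≤ ((2*N*2^N*m^(N-1) : ℕ) : ℝ≥0∞) := by exact_mod_cast hcard

theorem stmt_3 {N : ℕ} (μ : Measure (Fin N → ℝ)) [IsLocallyFiniteMeasure μ]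
    (K U : Set (Fin N → ℝ)) (hK : IsCompact K) (hU : IsOpen U) (hKU : K ⊆ U)
    (hμK : 0 < μ K) (hμU : μ U ≤ 3 / 2 * μ K)
    (r : ℝ) (hr : 0 < r)
    (hfit : ∀ x : Fin N → ℝ, (Bx x r ∩ K).Nonempty → Bx x r ⊆ U)
    (ε : ℝ) (hε : 0 < ε) :
    ∃ ω ∈ Bx (0 : Fin N → ℝ) r,
      3 / 4 * μ K ≤
        μ (K ∩ ⋃ c ∈ {c : Fin N → ℝ |
            (∃ n : Fin N → ℤ, ∀ i, c i = 2 * r * (n i) + ω i) ∧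
            (Bx c r ∩ K).Nonempty ∧
            μ (Fr c r ε) ≤ ENNReal.ofReal (16 * N * 2 ^ N * ε) * μ (Bx c r)},
          Bx c r) := by
  classical
  by_cases heasy : N = 0 ∨ 1 ≤ 16 * (N:ℝ) * 2 ^ N * ε
  · -- easy case: every cube meeting K is good; take ω = 0
    refine ⟨0, fun i => by simpa using hr.le, ?_⟩
    have hgood : ∀ c : Fin N → ℝ,
        μ (Fr c r ε) ≤ ENNReal.ofReal (16 * N * 2 ^ N * ε) * μ (Bx c r) := by
      intro c
      rcases heasy with hN0 | ht1
      · subst hN0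
        have hempty : Fr c r ε = ∅ := by
          ext z
          simp only [Fr, Set.mem_setOf_eq, Set.mem_empty_iff_false, iff_false, not_and]
          rintro - ⟨i, -⟩; exact i.elim0
        simp [hempty]
      · calc μ (Fr c r ε) ≤ μ (Bx c r) := measure_mono (fun z hz => hz.1)
          _ = 1 * μ (Bx c r) := (one_mul _).symm
          _ ≤ ENNReal.ofReal (16 * N * 2 ^ N * ε) * μ (Bx c r) :=
            mul_le_mul_left (ENNReal.one_le_ofReal.mpr ht1) _
    have hcov : K ⊆ ⋃ c ∈ {c : Fin N → ℝ |
        (∃ n : Fin N → ℤ, ∀ i, c i = 2 * r * (n i) + (0 : Fin N → ℝ) i) ∧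
        (Bx c r ∩ K).Nonempty ∧
        μ (Fr c r ε) ≤ ENNReal.ofReal (16 * N * 2 ^ N * ε) * μ (Bx c r)}, Bx c r := by
      intro y hy
      obtain ⟨n, hn⟩ := exists_cube hr 0 y
      exact Set.mem_iUnion₂.mpr ⟨fun i => 2 * r * (n i) + (0 : Fin N → ℝ) i,
        ⟨⟨n, fun i => rfl⟩, ⟨y, hn, hy⟩, hgood _⟩, hn⟩
    have h34 : (3:ℝ≥0∞)/4 ≤ 1 := by
      rw [ENNReal.div_le_iff (by norm_num) (by norm_num)]; norm_num
    calc 3/4 * μ K ≤ 1 * μ K := mul_le_mul_left h34 _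
      _ = μ K := one_mul _
      _ ≤ _ := measure_mono (Set.subset_inter Set.Subset.rfl hcov)
  · -- hard case
    push_neg at heasy
    obtain ⟨hN0, ht1⟩ := heasy
    have hN : 1 ≤ N := Nat.one_le_iff_ne_zero.mpr hN0
    have hNr : (1:ℝ) ≤ N := by exact_mod_cast hN
    have h2N : (2:ℝ) ≤ 2 ^ N := by
      calc (2:ℝ) = 2 ^ 1 := (pow_one 2).symm
        _ ≤ 2 ^ N := pow_le_pow_right₀ one_le_two hN
    have hε1 : ε < 1 := by
      have hkey : (32:ℝ) ≤ 16 * N * 2 ^ N := by nlinarith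
      nlinarith [mul_le_mul_of_nonneg_left hkey hε.le]
    set m : ℕ := ⌈1/ε⌉₊ with hm
    have hm1 : 0 < m := Nat.ceil_pos.mpr (by positivity)
    have hmR : (1:ℝ)/ε ≤ m := Nat.le_ceil _
    have hmε_low : 1 ≤ (m:ℝ) * ε := by
      have h1 : (1/ε) * ε = 1 := by field_simp
      nlinarith
    have hεm : (m:ℝ) * ε < 2 := by
      have h2 : (m:ℝ) < 1/ε + 1 := Nat.ceil_lt_add_one (by positivity)
      have h1 : (1/ε) * ε = 1 := by field_simp
      nlinarith [mul_lt_mul_of_pos_right h2 hε]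
    have hFinNonempty : Nonempty (Fin N → Fin m) := ⟨fun _ => ⟨0, hm1⟩⟩
    -- centers
    set cc : (Fin N → Fin m) → (Fin N → ℤ) → (Fin N → ℝ) :=
      fun κ n => fun i => 2*r*((n i : ℤ):ℝ) + (2*r*((κ i).val:ℝ)/(m:ℝ) - r) with hcc
    set MeetSet : (Fin N → Fin m) → Set (Fin N → ℤ) :=
      fun κ => {n | (Bx (cc κ n) r ∩ K).Nonempty} with hMeet
    set S : (Fin N → Fin m) → ℝ≥0∞ :=
      fun κ => ∑' n : Fin N → ℤ,
        (MeetSet κ).indicator (fun n' => μ (Fr (cc κ n') r ε)) n with hS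
    set B : ℕ := 2*N*2^N*m^(N-1) with hB
    -- total bound
    have htotal : ∑ κ : Fin N → Fin m, S κ ≤ (B:ℝ≥0∞) * μ U := by
      have step1 : ∀ κ n, (MeetSet κ).indicator (fun n' => μ (Fr (cc κ n') r ε)) n ≤
          μ (Fr (cc κ n) r ε ∩ U) := by
        intro κ n
        by_cases hmem : n ∈ MeetSet κ
        · rw [Set.indicator_of_mem hmem]
          exact measure_mono (Set.subset_inter Set.Subset.rfl
            (fun z hz => hfit (cc κ n) hmem (hz.1)))
        · rw [Set.indicator_of_notMem hmem]; exact zero_le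
      calc ∑ κ : Fin N → Fin m, S κ = ∑' κ : Fin N → Fin m, S κ := (tsum_fintype S).symm
        _ ≤ ∑' (κ : Fin N → Fin m) (n : Fin N → ℤ), μ (Fr (cc κ n) r ε ∩ U) :=
          ENNReal.tsum_le_tsum (fun κ => ENNReal.tsum_le_tsum (step1 κ))
        _ = ∑' p : (Fin N → Fin m) × (Fin N → ℤ), μ (Fr (cc p.1 p.2) r ε ∩ U) :=
          (ENNReal.tsum_prod (f := fun κ n => μ (Fr (cc κ n) r ε ∩ U))).symm
        _ = ∑' p : (Fin N → Fin m) × (Fin N → ℤ),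
            ∫⁻ y, (Fr (cc p.1 p.2) r ε ∩ U).indicator (fun _ => (1:ℝ≥0∞)) y ∂μ := by
          refine tsum_congr (fun p => ?_)
          simp [lintegral_indicator ((measurableSet_Fr (cc p.1 p.2) r ε).inter hU.measurableSet)]
        _ = ∫⁻ y, ∑' p : (Fin N → Fin m) × (Fin N → ℤ),
            (Fr (cc p.1 p.2) r ε ∩ U).indicator (fun _ => (1:ℝ≥0∞)) y ∂μ := by
          refine (lintegral_tsum (fun p => ?_)).symm
          exact (measurable_const.indicator
            ((measurableSet_Fr _ _ _).inter hU.measurableSet)).aemeasurable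
        _ ≤ ∫⁻ y, (B:ℝ≥0∞) * U.indicator (fun _ => (1:ℝ≥0∞)) y ∂μ := by
          refine lintegral_mono (fun y => ?_)
          by_cases hyU : y ∈ U
          · rw [Set.indicator_of_mem hyU, mul_one]
            calc ∑' p : (Fin N → Fin m) × (Fin N → ℤ),
                (Fr (cc p.1 p.2) r ε ∩ U).indicator (fun _ => (1:ℝ≥0∞)) y
                ≤ ∑' p : (Fin N → Fin m) × (Fin N → ℤ),
                  (Fr (cc p.1 p.2) r ε).indicator (fun _ => (1:ℝ≥0∞)) y :=
                ENNReal.tsum_le_tsum (fun p =>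
                  (Set.indicator_le_indicator_of_subset Set.inter_subset_left
                    (fun _ => zero_le)) y)
              _ ≤ (B:ℝ≥0∞) := count_bound hr hε hεm y
          · have hz : ∀ p : (Fin N → Fin m) × (Fin N → ℤ),
                (Fr (cc p.1 p.2) r ε ∩ U).indicator (fun _ => (1:ℝ≥0∞)) y = 0 := by
              intro p
              exact Set.indicator_of_notMem (fun hmem => hyU hmem.2) _
            rw [ENNReal.tsum_eq_zero.mpr hz]
            exact zero_le
        _ = (B:ℝ≥0∞) * μ U := by
          rw [lintegral_const_mul _ (measurable_const.indicator hU.measurableSet)]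
          congr 1
          simp [lintegral_indicator hU.measurableSet]
    -- select κ₀ minimizing S
    obtain ⟨κ₀, -, hmin⟩ := Finset.exists_min_image Finset.univ S Finset.univ_nonempty
    have hsm : ((m:ℝ≥0∞))^N * S κ₀ ≤ (B:ℝ≥0∞) * μ U := by
      have h1 := Finset.card_nsmul_le_sum Finset.univ S (S κ₀)
        (fun κ _ => hmin κ (Finset.mem_univ κ))
      rw [Finset.card_univ, Fintype.card_fun, Fintype.card_fin, Fintype.card_fin,
        nsmul_eq_mul] at h1
      calc ((m:ℝ≥0∞))^N * S κ₀ = ((m^N : ℕ):ℝ≥0∞) * S κ₀ := by push_cast; ring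
        _ ≤ ∑ κ : Fin N → Fin m, S κ := h1
        _ ≤ (B:ℝ≥0∞) * μ U := htotal
    -- cancel m^(N-1)
    have hms : (m:ℝ≥0∞) * S κ₀ ≤ ((2*N*2^N : ℕ):ℝ≥0∞) * μ U := by
      have hm_ne0 : (m:ℝ≥0∞) ≠ 0 := Nat.cast_ne_zero.mpr hm1.ne'
      have hpow_ne0 : ((m:ℝ≥0∞))^(N-1) ≠ 0 := pow_ne_zero _ hm_ne0
      have hpow_netop : ((m:ℝ≥0∞))^(N-1) ≠ ⊤ := ENNReal.pow_ne_top (ENNReal.natCast_ne_top m)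
      have hNs : N - 1 + 1 = N := by omega
      have hsplit : ((m:ℝ≥0∞))^N = ((m:ℝ≥0∞))^(N-1) * m := by
        conv_lhs => rw [← hNs]
        rw [pow_succ]
      have hBsplit : (B:ℝ≥0∞) = ((m:ℝ≥0∞))^(N-1) * ((2*N*2^N : ℕ):ℝ≥0∞) := by
        rw [hB]; push_cast; ring
      rw [← ENNReal.mul_le_mul_iff_right hpow_ne0 hpow_netop]
      calc ((m:ℝ≥0∞))^(N-1) * ((m:ℝ≥0∞) * S κ₀) = ((m:ℝ≥0∞))^N * S κ₀ := by
            rw [hsplit]; ring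
        _ ≤ (B:ℝ≥0∞) * μ U := hsm
        _ = ((m:ℝ≥0∞))^(N-1) * (((2*N*2^N : ℕ):ℝ≥0∞) * μ U) := by rw [hBsplit]; ring
    -- bad cubes
    set BadSet : Set (Fin N → ℤ) := {n | (Bx (cc κ₀ n) r ∩ K).Nonempty ∧
      ¬ (μ (Fr (cc κ₀ n) r ε) ≤ ENNReal.ofReal (16 * N * 2 ^ N * ε) * μ (Bx (cc κ₀ n) r))}
      with hBad
    have hA : ENNReal.ofReal (16 * N * 2 ^ N * ε) * μ (⋃ n ∈ BadSet, Bx (cc κ₀ n) r) ≤ S κ₀ := by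
      calc ENNReal.ofReal (16 * N * 2 ^ N * ε) * μ (⋃ n ∈ BadSet, Bx (cc κ₀ n) r)
          ≤ ENNReal.ofReal (16 * N * 2 ^ N * ε) * ∑' n : BadSet, μ (Bx (cc κ₀ n) r) :=
            mul_le_mul_right (measure_biUnion_le μ (Set.to_countable BadSet) _) _
        _ = ∑' n : BadSet, ENNReal.ofReal (16 * N * 2 ^ N * ε) * μ (Bx (cc κ₀ n) r) :=
            ENNReal.tsum_mul_left.symm
        _ ≤ ∑' n : BadSet, μ (Fr (cc κ₀ (n:Fin N → ℤ)) r ε) :=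
            ENNReal.tsum_le_tsum (fun n => (not_le.mp n.2.2).le)
        _ = ∑' n : Fin N → ℤ, BadSet.indicator (fun n' => μ (Fr (cc κ₀ n') r ε)) n :=
            tsum_subtype BadSet (fun n' => μ (Fr (cc κ₀ n') r ε))
        _ ≤ S κ₀ := ENNReal.tsum_le_tsum (fun n =>
            (Set.indicator_le_indicator_of_subset (fun n' hn' => hn'.1)
              (fun _ => zero_le)) n)
    -- numeric combination
    have hmt : ((16*N*2^N : ℕ):ℝ≥0∞) ≤ (m:ℝ≥0∞) * ENNReal.ofReal (16 * N * 2 ^ N * ε) := by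
      rw [← ENNReal.ofReal_natCast (16*N*2^N), ← ENNReal.ofReal_natCast m,
        ← ENNReal.ofReal_mul (by positivity)]
      apply ENNReal.ofReal_le_ofReal
      push_cast
      have hpos : (0:ℝ) ≤ 16 * N * 2^N := by positivity
      nlinarith
    have h32 : (2:ℝ≥0∞) * (3/2) = 3 := by
      rw [mul_comm, ENNReal.div_mul_cancel] <;> norm_num
    set BadU := ⋃ n ∈ BadSet, Bx (cc κ₀ n) r with hBadU
    have h16 : 16 * μ BadU ≤ 3 * μ K := by
      have hP_ne0 : ((N*2^N : ℕ):ℝ≥0∞) ≠ 0 := by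
        refine Nat.cast_ne_zero.mpr ?_
        positivity
      have hP_netop : ((N*2^N : ℕ):ℝ≥0∞) ≠ ⊤ := ENNReal.natCast_ne_top _
      rw [← ENNReal.mul_le_mul_iff_right hP_ne0 hP_netop]
      calc ((N*2^N : ℕ):ℝ≥0∞) * (16 * μ BadU)
          = ((16*N*2^N : ℕ):ℝ≥0∞) * μ BadU := by push_cast; ring
        _ ≤ ((m:ℝ≥0∞) * ENNReal.ofReal (16 * N * 2 ^ N * ε)) * μ BadU :=
            mul_le_mul_left hmt _
        _ = (m:ℝ≥0∞) * (ENNReal.ofReal (16 * N * 2 ^ N * ε) * μ BadU) := by ring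
        _ ≤ (m:ℝ≥0∞) * S κ₀ := mul_le_mul_right hA _
        _ ≤ ((2*N*2^N : ℕ):ℝ≥0∞) * μ U := hms
        _ ≤ ((2*N*2^N : ℕ):ℝ≥0∞) * (3/2 * μ K) := mul_le_mul_right hμU _
        _ = ((N*2^N : ℕ):ℝ≥0∞) * (3 * μ K) := by
            push_cast
            rw [show ((2:ℝ≥0∞) * N * 2^N) * (3/2 * μ K)
              = ((N:ℝ≥0∞) * 2^N) * ((2 * (3/2)) * μ K) by ring, h32]
    have hbad4 : 4 * μ BadU ≤ μ K := by
      rw [← ENNReal.mul_le_mul_iff_right (show (4:ℝ≥0∞) ≠ 0 by norm_num)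
        (show (4:ℝ≥0∞) ≠ ⊤ by norm_num)]
      calc (4:ℝ≥0∞) * (4 * μ BadU) = 16 * μ BadU := by ring
        _ ≤ 3 * μ K := h16
        _ ≤ 4 * μ K := mul_le_mul_left (by norm_num) _
    have hbadq : μ BadU ≤ μ K / 4 := by
      rw [ENNReal.le_div_iff_mul_le (Or.inl (by norm_num)) (Or.inl (by norm_num)), mul_comm]
      exact hbad4
    -- the chosen shift
    refine ⟨fun i => 2*r*((κ₀ i).val:ℝ)/(m:ℝ) - r, ?_, ?_⟩
    · intro i
      have hk : ((κ₀ i).val:ℝ) < m := by exact_mod_cast (κ₀ i).2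
      have hk0 : (0:ℝ) ≤ ((κ₀ i).val:ℝ) := by positivity
      have hmpos : (0:ℝ) < m := by exact_mod_cast hm1
      have hdiv0 : (0:ℝ) ≤ 2*r*((κ₀ i).val:ℝ)/(m:ℝ) := by positivity
      have hdiv2 : 2*r*((κ₀ i).val:ℝ)/(m:ℝ) ≤ 2*r := by
        rw [div_le_iff₀ hmpos]
        nlinarith
      simp only [Pi.zero_apply]
      rw [abs_le]
      constructor <;> [skip; skip] <;> nlinarith
    · -- coverage and conclusion
      set GS : Set (Fin N → ℝ) := {c : Fin N → ℝ |
          (∃ n : Fin N → ℤ, ∀ i, c i = 2 * r * (n i) + (2*r*((κ₀ i).val:ℝ)/(m:ℝ) - r)) ∧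
          (Bx c r ∩ K).Nonempty ∧
          μ (Fr c r ε) ≤ ENNReal.ofReal (16 * N * 2 ^ N * ε) * μ (Bx c r)} with hGS
      have hcov : K ⊆ (K ∩ ⋃ c ∈ GS, Bx c r) ∪ BadU := by
        intro y hy
        obtain ⟨n, hn⟩ := exists_cube hr (fun i => 2*r*((κ₀ i).val:ℝ)/(m:ℝ) - r) y
        have hnBx : y ∈ Bx (cc κ₀ n) r := hn
        have hmeets : (Bx (cc κ₀ n) r ∩ K).Nonempty := ⟨y, hnBx, hy⟩
        by_cases hok : μ (Fr (cc κ₀ n) r ε) ≤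
            ENNReal.ofReal (16 * N * 2 ^ N * ε) * μ (Bx (cc κ₀ n) r)
        · left
          exact ⟨hy, Set.mem_iUnion₂.mpr ⟨cc κ₀ n, ⟨⟨n, fun i => rfl⟩, hmeets, hok⟩, hnBx⟩⟩
        · right
          exact Set.mem_biUnion (show n ∈ BadSet from ⟨hmeets, hok⟩) hnBx
      have hKle : μ K ≤ μ (K ∩ ⋃ c ∈ GS, Bx c r) + μ BadU :=
        le_trans (measure_mono hcov) (measure_union_le _ _)
      have hfinal : 3/4 * μ K + μ BadU ≤ μ K := by
        calc 3/4 * μ K + μ BadU ≤ 3/4 * μ K + μ K / 4 := add_le_add le_rfl hbadq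
          _ = μ K := by
            have h1 : (3:ℝ≥0∞)/4 * μ K = 3 * μ K / 4 := by
              rw [div_eq_mul_inv, div_eq_mul_inv]; ring
            rw [h1, ENNReal.div_add_div_same, show (3:ℝ≥0∞) * μ K + μ K = 4 * μ K by ring,
              mul_div_assoc, ENNReal.mul_div_cancel' (by norm_num) (by norm_num)]
      have hBfin : μ BadU ≠ ⊤ := by
        have h1 : μ BadU ≤ μ K :=
          le_trans (le_mul_of_one_le_left (zero_le) (by norm_num)) hbad4
        exact (lt_of_le_of_lt h1 hK.measure_lt_top).ne
      exact (ENNReal.add_le_add_iff_right hBfin).mp (le_trans hfinal hKle)
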